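/- For every integer k ≥ 2, with u₁(k) = ⌊a_k / √(2 - a_{k-1})⌋ and φ_k = 2^(k-1)·arctan(2·u₁(k)/(u₁(k)² - 1)), the following exact two-term Machin-like identity holds: π/4 = 2^(k-1)·arctan(1/u₁(k)) + arctan( (1 - sin(φ_k)) / cos(φ_k) ). -/

import Mathlib

noncomputable def a : ℕ → ℝ
  | 0 => 0
  | k + 1 => Real.sqrt (2 + a k)

noncomputable def u₁ (k : ℕ) : ℤ := ⌊a k / Real.sqrt (2 - a (k - 1))⌋

noncomputable def φ (k : ℕ) : ℝ :=
  (2 : ℝ) ^ (k - 1) * Real.arctan (2 * (u₁ k : ℝ) / ((u₁ k : ℝ) ^ 2 - 1))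

open Real

lemma a_eq (k : ℕ) : a k = 2 * Real.cos (π / 2 ^ (k + 1)) := by
  induction k with
  | zero => simp [a]
  | succ n ih =>
    have hx0 : (0:ℝ) < π / 2 ^ (n + 2) := by positivity
    have hxlt : π / 2 ^ (n + 2) < π / 2 := by
      apply div_lt_div_of_pos_left pi_pos (by norm_num)
      have : (2:ℝ) ^ 2 ≤ 2 ^ (n + 2) := by
        apply pow_le_pow_right₀ (by norm_num); omega
      norm_num at this ⊢; linarith
    have hc : 0 ≤ Real.cos (π / 2 ^ (n + 2)) :=
      (Real.cos_pos_of_mem_Ioo ⟨by linarith [pi_pos], hxlt⟩).le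
    have hdouble : π / 2 ^ (n + 1) = 2 * (π / 2 ^ (n + 2)) := by
      rw [pow_succ]; ring
    have key : 2 + a n = (2 * Real.cos (π / 2 ^ (n + 2))) ^ 2 := by
      rw [ih, hdouble, Real.cos_two_mul]; ring
    rw [show a (n + 1) = Real.sqrt (2 + a n) from rfl, key,
      Real.sqrt_sq (by linarith)]

lemma a_irr : ∀ j : ℕ, 1 ≤ j → Irrational (a j) := by
  intro j hj
  induction j with
  | zero => omega
  | succ n ih =>
    have hnn : 0 ≤ a n := by
      cases n with
      | zero => simp [a]
      | succ m => exact Real.sqrt_nonneg _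
    rcases Nat.eq_or_lt_of_le hj with h | h
    · have : n = 0 := by omega
      subst this
      simpa [a] using irrational_sqrt_two
    · have hn1 : 1 ≤ n := by omega
      have hirr := ih hn1
      by_contra hrat
      rw [Irrational] at hrat
      push_neg at hrat
      obtain ⟨q, hq⟩ := hrat
      have hsq : (a (n + 1)) ^ 2 = 2 + a n := by
        rw [show a (n + 1) = Real.sqrt (2 + a n) from rfl]
        exact Real.sq_sqrt (by linarith)
      have : a n = ((q ^ 2 - 2 : ℚ) : ℝ) := by
        push_cast
        rw [← hq] at hsq; linarith
      exact hirr ⟨q ^ 2 - 2, this.symm⟩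

set_option maxHeartbeats 1000000 in
theorem stmt_15 : ∀ k : ℕ, 2 ≤ k →
    Real.pi / 4 =
      (2 : ℝ) ^ (k - 1) * Real.arctan (1 / (u₁ k : ℝ)) +
        Real.arctan ((1 - Real.sin (φ k)) / Real.cos (φ k)) := by
  intro k hk
  obtain ⟨m, rfl⟩ : ∃ m, k = m + 2 := ⟨k - 2, by omega⟩
  set x : ℝ := π / 2 ^ (m + 3) with hxdef
  -- basic bounds on x
  have hx0 : 0 < x := by positivity
  have hx8 : x ≤ π / 8 := by
    apply div_le_div_of_nonneg_left pi_pos.le (by norm_num)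
    calc (8:ℝ) = 2 ^ 3 := by norm_num
    _ ≤ 2 ^ (m + 3) := by apply pow_le_pow_right₀ (by norm_num); omega
  have hpi : (0:ℝ) < π := pi_pos
  have hx_lt_pi2 : x < π / 2 := by nlinarith
  have hsx : 0 < Real.sin x := Real.sin_pos_of_pos_of_lt_pi hx0 (by nlinarith)
  have hcx : 0 < Real.cos x := Real.cos_pos_of_mem_Ioo ⟨by linarith, hx_lt_pi2⟩
  -- a (m+2) = 2 cos x, a (m+1) = 2 cos 2x
  have ha2 : a (m + 2) = 2 * Real.cos x := a_eq (m + 2)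
  have ha1 : a (m + 1) = 2 * Real.cos (2 * x) := by
    rw [a_eq (m + 1)]
    congr 2
    rw [hxdef, pow_succ]; ring
  -- the square root
  have hsqrt : Real.sqrt (2 - a (m + 1)) = 2 * Real.sin x := by
    have : 2 - a (m + 1) = (2 * Real.sin x) ^ 2 := by
      rw [ha1, Real.cos_two_mul]
      nlinarith [Real.sin_sq_add_cos_sq x]
    rw [this, Real.sqrt_sq (by linarith)]
  -- c = cot x
  set c : ℝ := a (m + 2) / Real.sqrt (2 - a (m + 1)) with hcdef
  have hc_eq : c = Real.cos x / Real.sin x := by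
    rw [hcdef, ha2, hsqrt]
    field_simp
  -- c > 2
  have hc2 : 2 < c := by
    have h8pi : π / 8 < π / 2 := by linarith
    have hs8 : 0 < Real.sin (π / 8) :=
      Real.sin_pos_of_pos_of_lt_pi (by positivity) (by linarith)
    have hcosmono : Real.cos (π / 8) ≤ Real.cos x :=
      Real.cos_le_cos_of_nonneg_of_le_pi hx0.le (by linarith) hx8
    have hsinmono : Real.sin x ≤ Real.sin (π / 8) :=
      Real.sin_le_sin_of_le_of_le_pi_div_two (by linarith) (by linarith) hx8
    have hkey : 2 * Real.sin (π / 8) < Real.cos (π / 8) := by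
      rw [Real.sin_pi_div_eight, Real.cos_pi_div_eight]
      rw [show (2:ℝ) * (Real.sqrt (2 - Real.sqrt 2) / 2) = Real.sqrt (2 - Real.sqrt 2) by ring]
      have h2 : Real.sqrt 2 ^ 2 = 2 := Real.sq_sqrt (by norm_num)
      have h2lb : 1.4 < Real.sqrt 2 := by nlinarith [Real.sqrt_nonneg 2]
      have hlt : (4:ℝ) * (2 - Real.sqrt 2) < 2 + Real.sqrt 2 := by nlinarith
      have := Real.sqrt_lt_sqrt (by nlinarith : (0:ℝ) ≤ 4 * (2 - Real.sqrt 2)) hlt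
      rw [show (4:ℝ) * (2 - Real.sqrt 2) = (2 - Real.sqrt 2) * 2 ^ 2 by ring,
        Real.sqrt_mul (by nlinarith), Real.sqrt_sq (by norm_num)] at this
      linarith
    calc (2:ℝ) < Real.cos (π / 8) / Real.sin (π / 8) := by
          rw [lt_div_iff₀ hs8]; linarith
    _ ≤ Real.cos x / Real.sin x :=
          div_le_div₀ hcx.le hcosmono hsx hsinmono
    _ = c := hc_eq.symm
  -- irrationality of c
  have hc_irr : Irrational c := by
    rintro ⟨q, hq⟩
    have hkey : a (m + 1) * (c ^ 2 + 1) = 2 * (c ^ 2 - 1) := by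
      rw [hc_eq, ha1, Real.cos_two_mul]
      field_simp
      nlinarith [Real.sin_sq_add_cos_sq x]
    apply a_irr (m + 1) (by omega)
    refine ⟨2 * (q ^ 2 - 1) / (q ^ 2 + 1), ?_⟩
    have hq1 : (q:ℝ) ^ 2 + 1 ≠ 0 := by positivity
    push_cast
    rw [div_eq_iff hq1, hq]
    linarith [hkey]
  -- floor facts
  have hufloor : u₁ (m + 2) = ⌊c⌋ := by
    rw [u₁, hcdef]
    norm_num
  set u : ℤ := u₁ (m + 2) with hudef
  have huc : (u:ℝ) ≤ c := by rw [hufloor]; exact Int.floor_le c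
  have hune : (u:ℝ) ≠ c := by
    intro h
    exact hc_irr ⟨(u:ℚ), by push_cast; exact h⟩
  have hult : (u:ℝ) < c := lt_of_le_of_ne huc hune
  have hu2 : (2:ℤ) ≤ u := by
    rw [hufloor]; exact Int.le_floor.mpr (by exact_mod_cast hc2.le)
  have hu2R : (2:ℝ) ≤ (u:ℝ) := by exact_mod_cast hu2
  have hupos : (0:ℝ) < (u:ℝ) := by linarith
  have hugt : c - 1 < (u:ℝ) := by
    rw [hufloor]; exact Int.sub_one_lt_floor c
  -- tan x = 1/c
  have hcpos : 0 < c := by linarith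
  have htanx : Real.tan x = 1 / c := by
    rw [Real.tan_eq_sin_div_cos, hc_eq, one_div_div]
  -- lower bound: x < arctan (1/u)
  have h1 : x < Real.arctan (1 / (u:ℝ)) := by
    have ht : Real.tan x < 1 / (u:ℝ) := by
      rw [htanx]
      exact one_div_lt_one_div_of_lt hupos hult
    calc x = Real.arctan (Real.tan x) := (Real.arctan_tan (by linarith) hx_lt_pi2).symm
    _ < Real.arctan (1 / (u:ℝ)) := Real.arctan_strictMono ht
  -- upper bound: arctan (1/u) < 2x
  have h2x4 : 2 * x ≤ π / 4 := by linarith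
  have hs2x : 0 < Real.sin (2 * x) := Real.sin_pos_of_pos_of_lt_pi (by linarith) (by nlinarith)
  have hc2x : 0 < Real.cos (2 * x) :=
    Real.cos_pos_of_mem_Ioo ⟨by linarith, by linarith⟩
  have h2 : Real.arctan (1 / (u:ℝ)) < 2 * x := by
    have hcot : Real.cos (2 * x) / Real.sin (2 * x) ≤ c - 1 := by
      rw [div_le_iff₀ hs2x, hc_eq]
      have expand : (Real.cos x / Real.sin x - 1) * Real.sin (2 * x)
          = 2 * Real.cos x ^ 2 - 2 * Real.sin x * Real.cos x := by
        rw [Real.sin_two_mul]; field_simp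
      rw [expand, Real.cos_two_mul]
      have hsle := Real.sin_le_one (2 * x)
      rw [Real.sin_two_mul] at hsle
      nlinarith
    have hcotu : Real.cos (2 * x) / Real.sin (2 * x) < (u:ℝ) := hcot.trans_lt hugt
    have ht : 1 / (u:ℝ) < Real.tan (2 * x) := by
      rw [Real.tan_eq_sin_div_cos, div_lt_div_iff₀ hupos hc2x]
      have := (div_lt_iff₀ hs2x).mp hcotu
      nlinarith
    calc Real.arctan (1 / (u:ℝ)) < Real.arctan (Real.tan (2 * x)) := Real.arctan_strictMono ht
    _ = 2 * x := Real.arctan_tan (by linarith) (by linarith)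
  -- θ
  set θ : ℝ := (2:ℝ) ^ (m + 1) * Real.arctan (1 / (u:ℝ)) with hθdef
  have hpowpos : (0:ℝ) < (2:ℝ) ^ (m + 1) := by positivity
  have hpow : (2:ℝ) ^ (m + 1) * x = π / 4 := by
    rw [hxdef, show (2:ℝ) ^ (m + 3) = (2:ℝ) ^ (m + 1) * 4 by
      rw [show m + 3 = (m + 1) + 2 by omega, pow_add]; norm_num]
    have : (0:ℝ) < (2:ℝ) ^ (m + 1) := by positivity
    field_simp
  have hθlb : π / 4 < θ := by
    calc π / 4 = (2:ℝ) ^ (m + 1) * x := hpow.symm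
    _ < θ := by exact mul_lt_mul_of_pos_left h1 hpowpos
  have hθub : θ < π / 2 := by
    have h' : θ < (2:ℝ) ^ (m + 1) * (2 * x) := mul_lt_mul_of_pos_left h2 hpowpos
    have h'' : (2:ℝ) ^ (m + 1) * (2 * x) = π / 2 := by linear_combination 2 * hpow
    linarith
  -- φ = 2θ
  have hu1R : (1:ℝ) ≤ (u:ℝ) := by linarith
  have hdub : Real.arctan (2 * (u:ℝ) / ((u:ℝ) ^ 2 - 1)) = 2 * Real.arctan (1 / (u:ℝ)) := by
    rw [Real.two_mul_arctan (by rw [lt_div_iff₀ hupos]; linarith)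
      (by rw [div_lt_one hupos]; linarith)]
    congr 1
    have hu0 : (u:ℝ) ≠ 0 := by linarith
    have husq : (u:ℝ) ^ 2 - 1 ≠ 0 := by nlinarith
    field_simp
  have hφθ : φ (m + 2) = 2 * θ := by
    rw [φ, show (m + 2) - 1 = m + 1 from rfl, ← hudef, hdub, hθdef]
    ring
  -- trig at θ
  have hcθ : 0 < Real.cos θ := Real.cos_pos_of_mem_Ioo ⟨by linarith, hθub⟩
  have hsθ : 0 < Real.sin θ := Real.sin_pos_of_pos_of_lt_pi (by linarith) (by linarith)
  have hcs : Real.cos θ < Real.sin θ := by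
    have hA : Real.cos θ < Real.cos (π / 4) :=
      Real.strictAntiOn_cos ⟨by linarith, by linarith⟩ ⟨by linarith, by linarith⟩ hθlb
    have hB : Real.sin (π / 4) < Real.sin θ :=
      Real.strictMonoOn_sin ⟨by linarith, by linarith⟩ ⟨by linarith, by linarith⟩ hθlb
    rw [Real.cos_pi_div_four] at hA
    rw [Real.sin_pi_div_four] at hB
    linarith
  have hpyth : Real.sin θ ^ 2 + Real.cos θ ^ 2 = 1 := Real.sin_sq_add_cos_sq θ
  have hsum : (0:ℝ) < Real.cos θ + Real.sin θ := by linarith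
  have hdiffne : Real.cos θ - Real.sin θ ≠ 0 := by linarith
  have e1 : 1 - Real.sin (2 * θ) = (Real.cos θ - Real.sin θ) ^ 2 := by
    rw [Real.sin_two_mul]; linear_combination -hpyth
  have e2 : Real.cos (2 * θ) = (Real.cos θ - Real.sin θ) * (Real.cos θ + Real.sin θ) := by
    rw [Real.cos_two_mul]; linear_combination hpyth
  have e3 : Real.tan (π / 4 - θ) = (Real.cos θ - Real.sin θ) / (Real.cos θ + Real.sin θ) := by
    rw [Real.tan_eq_sin_div_cos, Real.sin_sub, Real.cos_sub,
      Real.sin_pi_div_four, Real.cos_pi_div_four]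
    have hs2 : Real.sqrt 2 ≠ 0 := by positivity
    have hden : Real.sqrt 2 / 2 * Real.cos θ + Real.sqrt 2 / 2 * Real.sin θ ≠ 0 := by
      positivity
    have hsum' : Real.cos θ + Real.sin θ ≠ 0 := ne_of_gt hsum
    field_simp
  have hratio : (1 - Real.sin (2 * θ)) / Real.cos (2 * θ) = Real.tan (π / 4 - θ) := by
    rw [e1, e2, e3, sq, mul_div_mul_left _ _ hdiffne]
  have harc : Real.arctan ((1 - Real.sin (2 * θ)) / Real.cos (2 * θ)) = π / 4 - θ := by
    rw [hratio, Real.arctan_tan (by linarith) (by linarith)]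
  rw [show (m + 2) - 1 = m + 1 from rfl, ← hθdef, hφθ, harc]
  ring
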